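/- Let d ≥ 2 and let {E_i}_{i=1}^n be a rank-one POVM on ℂ^d (each E_i nonzero of matrix rank one) such that the real linear span of {√E_1, …, √E_n} has dimension d² inside the Hermitian d×d matrices. Then its disturbance satisfies D = Σ_{l,m} (tr(√E_l √E_m))² − 2 Σ_l (tr √E_l)² + d² ≥ d²(d−1)/(d+1); that is, among rank-one informationally complete POVMs the SIC value of the disturbance is minimal. -/

import Mathlib

open Matrix BigOperators Finset
open scoped ComplexOrder

namespace Matrix.PosSemidef

/-- The positive semidefinite square root of a positive semidefinite matrix
(the definition `Matrix.PosSemidef.sqrt` of Mathlib, December 2024, removed since). -/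
noncomputable def sqrt {n 𝕜 : Type*} [Fintype n] [RCLike 𝕜] [DecidableEq n] {A : Matrix n n 𝕜}
    (hA : A.PosSemidef) : Matrix n n 𝕜 :=
  hA.1.eigenvectorUnitary.1 * diagonal ((↑) ∘ (√·) ∘ hA.1.eigenvalues) *
  (star hA.1.eigenvectorUnitary : Matrix n n 𝕜)

lemma posSemidef_sqrt {n 𝕜 : Type*} [Fintype n] [RCLike 𝕜] [DecidableEq n] {A : Matrix n n 𝕜}
    (hA : A.PosSemidef) : PosSemidef hA.sqrt := by
  apply PosSemidef.mul_mul_conjTranspose_same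
  refine posSemidef_diagonal_iff.mpr fun i ↦ ?_
  rw [Function.comp_apply, RCLike.nonneg_iff]
  constructor
  · simp only [Function.comp_apply, RCLike.ofReal_re]
    exact Real.sqrt_nonneg _
  · simp only [Function.comp_apply, RCLike.ofReal_im]

lemma sqrt_mul_self {n 𝕜 : Type*} [Fintype n] [RCLike 𝕜] [DecidableEq n] {A : Matrix n n 𝕜}
    (hA : A.PosSemidef) : hA.sqrt * hA.sqrt = A := by
  set C : Matrix n n 𝕜 := hA.1.eigenvectorUnitary.1 with hC
  set E := diagonal ((↑) ∘ Real.sqrt ∘ hA.1.eigenvalues : n → 𝕜) with hE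
  have hCC : star C * C = 1 := Unitary.star_mul_self_of_mem hA.1.eigenvectorUnitary.2
  have hEE : E * E = diagonal ((↑) ∘ hA.1.eigenvalues) := by
    rw [hE, diagonal_mul_diagonal]
    congr 1
    funext v
    simp [← RCLike.ofReal_mul, Real.mul_self_sqrt (hA.eigenvalues_nonneg v)]
  have h : hA.sqrt * hA.sqrt = C * (E * (star C * C) * E) * star C := by
    simp only [sqrt, hC, hE, mul_assoc]
  rw [h, hCC, mul_one, hEE]
  conv_rhs => rw [hA.1.spectral_theorem]
  simp
  rfl

end Matrix.PosSemidef

lemma psd_rank_one_decomp {d : ℕ} {A : Matrix (Fin d) (Fin d) ℂ}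
    (hA : A.PosSemidef) (hr : A.rank = 1) :
    ∃ w : Fin d → ℂ, A = Matrix.vecMulVec w (star w) := by
  classical
  have hfr : Module.finrank ℂ (LinearMap.range A.mulVecLin) = 1 := hr
  obtain ⟨v, hv0, hvspan⟩ := finrank_eq_one_iff'.mp hfr
  set u : Fin d → ℂ := (v : Fin d → ℂ) with hu
  have hu0 : u ≠ 0 := fun h => hv0 (Subtype.ext h)
  obtain ⟨i0, hi0⟩ : ∃ i, u i ≠ 0 := by
    by_contra h
    push_neg at h
    exact hu0 (funext h)
  -- columns are multiples of u
  have hc : ∀ j : Fin d, ∃ c : ℂ, ∀ i, c * u i = A i j := by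
    intro j
    have hmem : (fun i => A i j) ∈ LinearMap.range A.mulVecLin := by
      refine ⟨Pi.single j 1, ?_⟩
      simp [Matrix.mulVecLin_apply]
      rfl
    obtain ⟨cc, hcc⟩ := hvspan ⟨_, hmem⟩
    refine ⟨cc, fun i => ?_⟩
    have h' : ((cc • v : LinearMap.range A.mulVecLin) : Fin d → ℂ) = fun i => A i j :=
      Subtype.ext_iff.mp hcc
    have h'' := congrFun h' i
    simpa [u, smul_eq_mul] using h''
  choose c hc using hc
  -- Hermitian relation
  have hherm : ∀ i j, A j i = starRingEnd ℂ (A i j) := by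
    intro i j
    have := congrFun (congrFun hA.1 j) i
    simpa [Matrix.conjTranspose_apply] using this.symm
  have hdiag : A i0 i0 = c i0 * u i0 := (hc i0 i0).symm
  have hAij : ∀ i j, A i j * (u i0 * starRingEnd ℂ (u i0)) = A i0 i0 * (u i * starRingEnd ℂ (u j)) := by
    intro i j
    have h1 : A i j = c j * u i := (hc j i).symm
    have h2 : A i0 j = c j * u i0 := (hc j i0).symm
    have h3 : A j i0 = c i0 * u j := (hc i0 j).symm
    have h4 : A i0 j = starRingEnd ℂ (A j i0) := hherm j i0
    have h5 : c j * u i0 = starRingEnd ℂ (c i0) * starRingEnd ℂ (u j) := by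
      rw [← h2, h4, h3, map_mul (starRingEnd ℂ)]
    have h6 : starRingEnd ℂ (A i0 i0) = A i0 i0 := (hherm i0 i0).symm
    calc A i j * (u i0 * starRingEnd ℂ (u i0))
        = (c j * u i0) * (u i * starRingEnd ℂ (u i0)) := by rw [h1]; ring
      _ = (starRingEnd ℂ (c i0) * starRingEnd ℂ (u i0)) * (u i * starRingEnd ℂ (u j)) := by
          rw [h5]; ring
      _ = starRingEnd ℂ (c i0 * u i0) * (u i * starRingEnd ℂ (u j)) := by
          rw [map_mul (starRingEnd ℂ)]
      _ = A i0 i0 * (u i * starRingEnd ℂ (u j)) := by rw [← hdiag, h6]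
  -- A i0 i0 is a nonnegative real
  have hpsd0 : 0 ≤ A i0 i0 := by
    exact hA.diag_nonneg
  set r : ℝ := (A i0 i0).re with hrdef
  have hr0 : 0 ≤ r := by
    have := Complex.le_def.mp hpsd0
    simpa using this.1
  have hAre : A i0 i0 = (r : ℂ) := by
    have := Complex.le_def.mp hpsd0
    apply Complex.ext
    · simp [hrdef]
    · simp [hrdef, ← this.2]
  set ns : ℝ := Complex.normSq (u i0) with hnsdef
  have hns : (ns : ℂ) = u i0 * starRingEnd ℂ (u i0) := (Complex.mul_conj _).symm
  have hnspos : 0 < ns := Complex.normSq_pos.mpr hi0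
  have hne : (ns : ℂ) ≠ 0 := by exact_mod_cast hnspos.ne'
  set t : ℝ := Real.sqrt (r / ns) with htdef
  refine ⟨fun i => (t : ℂ) * u i, ?_⟩
  ext i j
  have hstar : star (fun i => (t : ℂ) * u i) j = (t : ℂ) * starRingEnd ℂ (u j) := by
    simp [Complex.conj_ofReal]
  rw [Matrix.vecMulVec_apply, hstar]
  have ht2 : (t : ℂ) * (t : ℂ) = (r : ℂ) / (ns : ℂ) := by
    have : t * t = r / ns := Real.mul_self_sqrt (by positivity)
    rw [← Complex.ofReal_mul, this]
    push_cast
    ring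
  have goal2 : A i j = (r : ℂ) / (ns : ℂ) * (u i * starRingEnd ℂ (u j)) := by
    have key := hAij i j
    rw [← hns, hAre] at key
    field_simp
    linear_combination key
  rw [goal2, ← ht2]
  ring


lemma trace_outer_mul_outer {d : ℕ} (a b : Fin d → ℂ) :
    (Matrix.vecMulVec a (star a) * Matrix.vecMulVec b (star b)).trace
      = (star a ⬝ᵥ b) * (star b ⬝ᵥ a) := by
  simp only [Matrix.trace, Matrix.diag_apply, Matrix.mul_apply, Matrix.vecMulVec_apply,
    Pi.star_apply, dotProduct]
  rw [Finset.sum_mul_sum]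
  rw [Finset.sum_comm]
  refine Finset.sum_congr rfl fun j _ => Finset.sum_congr rfl fun i _ => by ring

lemma trace_outer {d : ℕ} (a : Fin d → ℂ) :
    (Matrix.vecMulVec a (star a)).trace = star a ⬝ᵥ a := by
  simp only [Matrix.trace, Matrix.diag_apply, Matrix.vecMulVec_apply, Pi.star_apply,
    dotProduct]
  exact Finset.sum_congr rfl fun i _ => by ring

section symsum
variable {d : ℕ}

/-- sum over all pairs equals weighted sum over ordered pairs, for symmetric functions -/
lemma sym_pair_sum (h : Fin d × Fin d → ℝ) (hsym : ∀ i j, h (i, j) = h (j, i)) :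
    ∑ P : Fin d × Fin d, h P
      = ∑ P ∈ Finset.univ.filter (fun P : Fin d × Fin d => P.1 ≤ P.2),
          (if P.1 = P.2 then (1 : ℝ) else 2) * h P := by
  classical
  have h1 : ∑ P : Fin d × Fin d, h P
      = ∑ P ∈ Finset.univ.filter (fun P : Fin d × Fin d => P.1 ≤ P.2), h P
        + ∑ P ∈ Finset.univ.filter (fun P : Fin d × Fin d => ¬ P.1 ≤ P.2), h P :=
    (Finset.sum_filter_add_sum_filter_not _ _ _).symm
  have h2 : ∑ P ∈ Finset.univ.filter (fun P : Fin d × Fin d => ¬ P.1 ≤ P.2), h P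
      = ∑ P ∈ Finset.univ.filter (fun P : Fin d × Fin d => P.1 < P.2), h P := by
    refine Finset.sum_nbij' (fun P => (P.2, P.1)) (fun P => (P.2, P.1)) ?_ ?_ ?_ ?_ ?_ <;>
      simp only [Finset.mem_filter, Finset.mem_univ, true_and]
    · intro a ha; exact lt_of_not_ge ha
    · intro a ha; exact not_le_of_gt ha
    · intro a _; trivial
    · intro a _; trivial
    · intro a _; simpa using hsym a.1 a.2
  have h3 : ∑ P ∈ Finset.univ.filter (fun P : Fin d × Fin d => P.1 ≤ P.2), h P
      = ∑ P ∈ Finset.univ.filter (fun P : Fin d × Fin d => P.1 = P.2), h P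
        + ∑ P ∈ Finset.univ.filter (fun P : Fin d × Fin d => P.1 < P.2), h P := by
    rw [← Finset.sum_filter_add_sum_filter_not
      (Finset.univ.filter (fun P : Fin d × Fin d => P.1 ≤ P.2))
      (fun P => P.1 = P.2) h]
    congr 1
    · congr 1
      ext P
      simp only [Finset.mem_filter, Finset.mem_univ, true_and]
      constructor
      · rintro ⟨_, h⟩; exact h
      · intro h; exact ⟨le_of_eq h, h⟩
    · congr 1
      ext P
      simp only [Finset.mem_filter, Finset.mem_univ, true_and]
      exact ⟨fun ⟨hle, hne⟩ => lt_of_le_of_ne hle hne, fun h => ⟨le_of_lt h, ne_of_lt h⟩⟩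
  have h4 : ∑ P ∈ Finset.univ.filter (fun P : Fin d × Fin d => P.1 ≤ P.2),
          (if P.1 = P.2 then (1 : ℝ) else 2) * h P
      = ∑ P ∈ Finset.univ.filter (fun P : Fin d × Fin d => P.1 = P.2), h P
        + 2 * ∑ P ∈ Finset.univ.filter (fun P : Fin d × Fin d => P.1 < P.2), h P := by
    rw [← Finset.sum_filter_add_sum_filter_not
      (Finset.univ.filter (fun P : Fin d × Fin d => P.1 ≤ P.2))
      (fun P => P.1 = P.2) (fun P => (if P.1 = P.2 then (1 : ℝ) else 2) * h P)]
    rw [Finset.mul_sum]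
    congr 1
    · rw [Finset.filter_filter]
      refine Finset.sum_congr ?_ fun P hP => ?_
      · ext P
        simp only [Finset.mem_filter, Finset.mem_univ, true_and]
        exact ⟨fun ⟨_, h⟩ => h, fun h => ⟨le_of_eq h, h⟩⟩
      · simp only [Finset.mem_filter] at hP
        rw [if_pos hP.2, one_mul]
    · rw [Finset.filter_filter]
      refine Finset.sum_congr ?_ fun P hP => ?_
      · ext P
        simp only [Finset.mem_filter, Finset.mem_univ, true_and]
        exact ⟨fun ⟨hle, hne⟩ => lt_of_le_of_ne hle hne, fun h => ⟨le_of_lt h, ne_of_lt h⟩⟩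
      · simp only [Finset.mem_filter, Finset.mem_univ, true_and] at hP
        rw [if_neg (ne_of_lt hP), two_mul]
  rw [h1, h2, h3, h4]
  ring

lemma card_le_pairs : 2 * (Finset.univ.filter (fun P : Fin d × Fin d => P.1 ≤ P.2)).card
    = d * d + d := by
  classical
  have h1 : (Finset.univ.filter (fun P : Fin d × Fin d => P.1 ≤ P.2)).card
      + (Finset.univ.filter (fun P : Fin d × Fin d => ¬ P.1 ≤ P.2)).card
      = d * d := by
    rw [Finset.card_filter_add_card_filter_not]
    simp [Fintype.card_prod]
  have h2 : (Finset.univ.filter (fun P : Fin d × Fin d => ¬ P.1 ≤ P.2)).card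
      = (Finset.univ.filter (fun P : Fin d × Fin d => P.1 < P.2)).card := by
    refine Finset.card_nbij' (fun P => (P.2, P.1)) (fun P => (P.2, P.1)) ?_ ?_ ?_ ?_ <;>
      simp only [Set.MapsTo, Set.LeftInvOn, Set.RightInvOn, Finset.mem_coe, Finset.mem_filter, Finset.mem_univ, true_and]
    · intro a ha; exact lt_of_not_ge ha
    · intro a ha; exact not_le_of_gt ha
    · intro a _; trivial
    · intro a _; trivial
  have h3 : (Finset.univ.filter (fun P : Fin d × Fin d => P.1 ≤ P.2)).card
      = d + (Finset.univ.filter (fun P : Fin d × Fin d => P.1 < P.2)).card := by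
    rw [← Finset.card_filter_add_card_filter_not
      (s := Finset.univ.filter (fun P : Fin d × Fin d => P.1 ≤ P.2))
      (p := fun P => P.1 = P.2)]
    congr 1
    · rw [Finset.filter_filter]
      have : #(Finset.univ.filter (fun P : Fin d × Fin d => P.1 ≤ P.2 ∧ P.1 = P.2))
          = #(Finset.univ : Finset (Fin d)) := by
        refine Finset.card_nbij (fun P : Fin d × Fin d => P.1) ?_ ?_ ?_
        · intro a _; exact Finset.mem_univ _
        · intro a ha b hb hab
          simp only [Finset.mem_coe, Finset.mem_filter, Finset.mem_univ, true_and] at ha hb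
          exact Prod.ext hab (ha.2 ▸ hb.2 ▸ hab)
        · intro i _
          exact ⟨(i, i), by simp, rfl⟩
      rw [this, Finset.card_univ, Fintype.card_fin]
    · rw [Finset.filter_filter]
      congr 1
      ext P
      simp only [Finset.mem_filter, Finset.mem_univ, true_and]
      exact ⟨fun ⟨hle, hne⟩ => lt_of_le_of_ne hle hne, fun h => ⟨le_of_lt h, ne_of_lt h⟩⟩
  omega

end symsum

set_option maxHeartbeats 1000000 in
/-- For `d ≥ 2` and a rank-one informationally complete POVM `{E_i}` on `ℂ^d`
(each effect of rank one, with the real span of `{√E_i}` of dimension `d²`), the disturbance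
satisfies `D = Σ_{l,m} (tr(√E_l √E_m))² − 2 Σ_l (tr √E_l)² + d² ≥ d²(d−1)/(d+1)`. -/
theorem rank_one_ic_povm_disturbance_ge_sic
    (d n : ℕ) (hd : 2 ≤ d)
    (E : Fin n → Matrix (Fin d) (Fin d) ℂ)
    (hE : ∀ i, (E i).PosSemidef)
    (hsum : ∑ i, E i = 1)
    (hrank : ∀ i, (E i).rank = 1)
    (hspan : Module.finrank ℝ
      (Submodule.span ℝ (Set.range fun i => (hE i).sqrt)) = d ^ 2) :
    (d : ℝ) ^ 2 * ((d : ℝ) - 1) / ((d : ℝ) + 1)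
      ≤ ∑ l, ∑ m, (((hE l).sqrt * (hE m).sqrt).trace.re) ^ 2
          - 2 * ∑ l, (((hE l).sqrt).trace.re) ^ 2 + (d : ℝ) ^ 2 := by
  classical
  -- Step 1: rank-one decomposition of the square roots
  have hwex : ∀ l : Fin n, ∃ w : Fin d → ℂ,
      (hE l).sqrt = Matrix.vecMulVec w (star w) := by
    intro l
    have h1 : (((hE l).sqrt)ᴴ * (hE l).sqrt).rank = ((hE l).sqrt).rank :=
      Matrix.rank_conjTranspose_mul_self _
    rw [(hE l).posSemidef_sqrt.1, (hE l).sqrt_mul_self] at h1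
    exact psd_rank_one_decomp (hE l).posSemidef_sqrt (by rw [← h1, hrank l])
  choose w hw using hwex
  set s : Fin n → Fin n → ℂ := fun l m => star (w l) ⬝ᵥ w m with hs
  set q : Fin n → ℝ := fun l => ∑ i, Complex.normSq (w l i) with hq
  have hs_ll : ∀ l, s l l = ((q l : ℝ) : ℂ) := by
    intro l
    simp only [hs, hq, dotProduct, Pi.star_apply, Complex.ofReal_sum]
    exact Finset.sum_congr rfl fun i _ => by
      rw [Complex.normSq_eq_conj_mul_self]; rfl
  have hconj : ∀ l m, s m l = starRingEnd ℂ (s l m) := by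
    intro l m
    simp only [hs, dotProduct, map_sum, Pi.star_apply, RCLike.star_def,
      map_mul (starRingEnd ℂ), Complex.conj_conj]
    exact Finset.sum_congr rfl fun i _ => by ring
  -- traces
  have htr2 : ∀ l m, ((hE l).sqrt * (hE m).sqrt).trace
      = ((Complex.normSq (s l m) : ℝ) : ℂ) := by
    intro l m
    rw [hw l, hw m, trace_outer_mul_outer]
    rw [show star (w l) ⬝ᵥ w m = s l m from rfl, show star (w m) ⬝ᵥ w l = s m l from rfl,
      hconj l m, Complex.mul_conj]
  have htr1 : ∀ l, ((hE l).sqrt).trace = ((q l : ℝ) : ℂ) := by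
    intro l
    rw [hw l, trace_outer, show star (w l) ⬝ᵥ w l = s l l from rfl, hs_ll]
  -- normalization : ∑ q l ^ 2 = d
  have hqd : ∑ l, (q l) ^ 2 = (d : ℝ) := by
    have h1 : ∀ l, (E l).trace = (((q l) ^ 2 : ℝ) : ℂ) := by
      intro l
      rw [← (hE l).sqrt_mul_self, htr2 l l, hs_ll l]
      norm_cast
      rw [Complex.normSq_ofReal]
      ring
    have h2 : ∑ l, (E l).trace = (d : ℂ) := by
      rw [← Matrix.trace_sum, hsum, Matrix.trace_one]
      simp
    rw [Finset.sum_congr rfl fun l _ => h1 l] at h2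
    have h3 : ((∑ l, (q l) ^ 2 : ℝ) : ℂ) = ((d : ℝ) : ℂ) := by
      push_cast
      rw [← h2]
      norm_num
    exact_mod_cast h3
  -- the double-index vectors
  set f : Fin n → Fin d × Fin d → ℂ := fun l P => w l P.1 * w l P.2 with hf
  set G : (Fin d × Fin d) → (Fin d × Fin d) → ℂ :=
    fun P Q => ∑ l, f l P * starRingEnd ℂ (f l Q) with hG
  set g : Fin d × Fin d → ℝ := fun P => ∑ l, Complex.normSq (f l P) with hg
  set T : ℝ := ∑ l, ∑ m, (Complex.normSq (s l m)) ^ 2 with hT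
  -- ∑_P f l P * conj (f m P) = (s m l)^2
  have hPsum : ∀ l m, ∑ P : Fin d × Fin d, f l P * starRingEnd ℂ (f m P) = (s m l) ^ 2 := by
    intro l m
    rw [Fintype.sum_prod_type]
    rw [show (s m l) ^ 2 = (∑ i, starRingEnd ℂ (w m i) * w l i)
        * (∑ j, starRingEnd ℂ (w m j) * w l j) by
      rw [sq]
      congr 1 <;>
        exact Finset.sum_congr rfl fun i _ => by
          simp only [hs, dotProduct, Pi.star_apply, RCLike.star_def]]
    rw [Finset.sum_mul_sum]
    refine Finset.sum_congr rfl fun i _ => Finset.sum_congr rfl fun j _ => ?_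
    simp only [hf, map_mul (starRingEnd ℂ)]
    ring
  have hQsum : ∀ l m, ∑ Q : Fin d × Fin d, starRingEnd ℂ (f l Q) * f m Q = (s l m) ^ 2 := by
    intro l m
    have h1 := congrArg (starRingEnd ℂ) (hPsum l m)
    rw [map_sum, map_pow] at h1
    have h2 : starRingEnd ℂ (s m l) = s l m := by
      rw [hconj l m, Complex.conj_conj]
    rw [← h2, ← h1]
    exact Finset.sum_congr rfl fun Q _ => by
      simp only [map_mul (starRingEnd ℂ), Complex.conj_conj]
      try ring
  -- Fact: double sum of |G|² equals T
  have hmulconj : ∀ P Q, G P Q * starRingEnd ℂ (G P Q)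
      = ((Complex.normSq (G P Q) : ℝ) : ℂ) := fun P Q => Complex.mul_conj _
  have hTsum : ∑ P : Fin d × Fin d, ∑ Q : Fin d × Fin d, Complex.normSq (G P Q) = T := by
    have expand : ∀ P Q : Fin d × Fin d, G P Q * starRingEnd ℂ (G P Q)
        = ∑ l, ∑ m, (f l P * starRingEnd ℂ (f m P)) * (starRingEnd ℂ (f l Q) * f m Q) := by
      intro P Q
      rw [hG]
      simp only
      rw [map_sum, Finset.sum_mul_sum]
      refine Finset.sum_congr rfl fun l _ => Finset.sum_congr rfl fun m _ => ?_
      simp only [map_mul (starRingEnd ℂ), Complex.conj_conj]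
      try ring
    have hC : ∑ P : Fin d × Fin d, ∑ Q : Fin d × Fin d, (G P Q * starRingEnd ℂ (G P Q))
        = ((T : ℝ) : ℂ) := by
      calc ∑ P : Fin d × Fin d, ∑ Q : Fin d × Fin d, (G P Q * starRingEnd ℂ (G P Q))
          = ∑ P : Fin d × Fin d, ∑ Q : Fin d × Fin d, ∑ l, ∑ m,
              (f l P * starRingEnd ℂ (f m P)) * (starRingEnd ℂ (f l Q) * f m Q) :=
            Finset.sum_congr rfl fun P _ => Finset.sum_congr rfl fun Q _ => expand P Q
        _ = ∑ P : Fin d × Fin d, ∑ l, ∑ m, ∑ Q : Fin d × Fin d,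
              (f l P * starRingEnd ℂ (f m P)) * (starRingEnd ℂ (f l Q) * f m Q) := by
            refine Finset.sum_congr rfl fun P _ => ?_
            rw [Finset.sum_comm]
            exact Finset.sum_congr rfl fun l _ => Finset.sum_comm
        _ = ∑ l, ∑ P : Fin d × Fin d, ∑ m, ∑ Q : Fin d × Fin d,
              (f l P * starRingEnd ℂ (f m P)) * (starRingEnd ℂ (f l Q) * f m Q) :=
            Finset.sum_comm
        _ = ∑ l, ∑ m, ∑ P : Fin d × Fin d, ∑ Q : Fin d × Fin d,
              (f l P * starRingEnd ℂ (f m P)) * (starRingEnd ℂ (f l Q) * f m Q) :=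
            Finset.sum_congr rfl fun l _ => Finset.sum_comm
        _ = ∑ l, ∑ m, (∑ P : Fin d × Fin d, f l P * starRingEnd ℂ (f m P))
              * (∑ Q : Fin d × Fin d, starRingEnd ℂ (f l Q) * f m Q) :=
            Finset.sum_congr rfl fun l _ => Finset.sum_congr rfl fun m _ =>
              (Finset.sum_mul_sum _ _ _ _).symm
        _ = ∑ l, ∑ m, (((Complex.normSq (s l m)) ^ 2 : ℝ) : ℂ) := by
            refine Finset.sum_congr rfl fun l _ => Finset.sum_congr rfl fun m _ => ?_
            rw [hPsum l m, hQsum l m, hconj l m]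
            rw [show (starRingEnd ℂ (s l m)) ^ 2 * (s l m) ^ 2
                = ((s l m) * starRingEnd ℂ (s l m)) ^ 2 by ring]
            rw [Complex.mul_conj]
            norm_cast
        _ = ((T : ℝ) : ℂ) := by
            rw [hT]
            push_cast
            rfl
    have h4 : ((∑ P : Fin d × Fin d, ∑ Q : Fin d × Fin d, Complex.normSq (G P Q) : ℝ) : ℂ)
        = ((T : ℝ) : ℂ) := by
      rw [← hC]
      push_cast
      exact Finset.sum_congr rfl fun P _ => Finset.sum_congr rfl fun Q _ =>
        (hmulconj P Q).symm
    exact_mod_cast h4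
  -- diagonal of G
  have hGdiag : ∀ P, G P P = ((g P : ℝ) : ℂ) := by
    intro P
    rw [hG, hg]
    simp only [Complex.ofReal_sum]
    exact Finset.sum_congr rfl fun l _ => Complex.mul_conj _
  -- total mass of g
  have hgsum : ∑ P : Fin d × Fin d, g P = (d : ℝ) := by
    rw [← hqd]
    rw [hg]
    simp only
    rw [Finset.sum_comm]
    refine Finset.sum_congr rfl fun l _ => ?_
    rw [Fintype.sum_prod_type]
    rw [show (q l) ^ 2 = (∑ i, Complex.normSq (w l i)) * (∑ j, Complex.normSq (w l j)) by
      rw [hq, sq]]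
    rw [Finset.sum_mul_sum]
    exact Finset.sum_congr rfl fun i _ => Finset.sum_congr rfl fun j _ => by
      simp [hf, Complex.normSq_mul]
  -- symmetry
  have hfsym : ∀ l (i j : Fin d), f l (i, j) = f l (j, i) := by
    intro l i j
    simp only [hf]
    exact mul_comm _ _
  have hgsym : ∀ i j : Fin d, g (i, j) = g (j, i) := by
    intro i j
    exact Finset.sum_congr rfl fun l _ => by rw [hfsym l i j]
  have hGsym1 : ∀ (i j : Fin d) Q, G (i, j) Q = G (j, i) Q := by
    intro i j Q
    exact Finset.sum_congr rfl fun l _ => by rw [hfsym l i j]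
  have hGsym2 : ∀ P (i j : Fin d), G P (i, j) = G P (j, i) := by
    intro P i j
    exact Finset.sum_congr rfl fun l _ => by rw [hfsym l i j]
  -- the Cauchy-Schwarz estimate over the "symmetric subspace" index set
  set S : Finset (Fin d × Fin d) := Finset.univ.filter (fun P : Fin d × Fin d => P.1 ≤ P.2)
    with hS
  set cw : Fin d × Fin d → ℝ := fun P => if P.1 = P.2 then (1 : ℝ) else 2 with hcw
  have hcw0 : ∀ P, 0 ≤ cw P := by
    intro P
    rw [hcw]
    dsimp only
    split <;> norm_num
  have hcd : ∑ P ∈ S, cw P * g P = (d : ℝ) := by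
    rw [hS, hcw, ← sym_pair_sum g hgsym, hgsum]
  have hCS : (d : ℝ) ^ 2 ≤ (S.card : ℝ) * ∑ P ∈ S, (cw P * g P) ^ 2 := by
    rw [← hcd]
    exact sq_sum_le_card_mul_sum_sq
  have hstep : ∀ P ∈ S, (cw P * g P) ^ 2
      ≤ ∑ Q ∈ S, (cw P * cw Q) * Complex.normSq (G P Q) := by
    intro P hP
    have h0 : (cw P * g P) ^ 2 = (cw P * cw P) * Complex.normSq (G P P) := by
      rw [hGdiag P, Complex.normSq_ofReal]
      ring
    rw [h0]
    exact Finset.single_le_sum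
      (f := fun Q => (cw P * cw Q) * Complex.normSq (G P Q))
      (fun Q _ => mul_nonneg (mul_nonneg (hcw0 P) (hcw0 Q)) (Complex.normSq_nonneg _)) hP
  have hinner : ∀ P, ∑ Q ∈ S, cw Q * Complex.normSq (G P Q)
      = ∑ Q : Fin d × Fin d, Complex.normSq (G P Q) := by
    intro P
    rw [hS, hcw]
    exact (sym_pair_sum (fun Q => Complex.normSq (G P Q))
      (fun i j => by rw [hGsym2 P i j])).symm
  have houter : ∑ P ∈ S, cw P * (∑ Q : Fin d × Fin d, Complex.normSq (G P Q))
      = ∑ P : Fin d × Fin d, ∑ Q : Fin d × Fin d, Complex.normSq (G P Q) := by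
    rw [hS, hcw]
    exact (sym_pair_sum (fun P => ∑ Q : Fin d × Fin d, Complex.normSq (G P Q))
      (fun i j => by
        exact Finset.sum_congr rfl fun Q _ => by rw [hGsym1 i j Q])).symm
  have hsum2 : ∑ P ∈ S, ∑ Q ∈ S, (cw P * cw Q) * Complex.normSq (G P Q) = T := by
    calc ∑ P ∈ S, ∑ Q ∈ S, (cw P * cw Q) * Complex.normSq (G P Q)
        = ∑ P ∈ S, cw P * ∑ Q ∈ S, cw Q * Complex.normSq (G P Q) := by
          refine Finset.sum_congr rfl fun P _ => ?_
          rw [Finset.mul_sum]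
          exact Finset.sum_congr rfl fun Q _ => by ring
      _ = ∑ P ∈ S, cw P * (∑ Q : Fin d × Fin d, Complex.normSq (G P Q)) := by
          exact Finset.sum_congr rfl fun P _ => by rw [hinner P]
      _ = T := by rw [houter, hTsum]
  have hfinal : (d : ℝ) ^ 2 ≤ (S.card : ℝ) * T := by
    refine le_trans hCS ?_
    rw [← hsum2]
    refine mul_le_mul_of_nonneg_left ?_ (Nat.cast_nonneg _)
    exact Finset.sum_le_sum hstep
  have hcard : ((S.card : ℝ)) * 2 = (d : ℝ) * d + d := by
    have h := card_le_pairs (d := d)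
    rw [hS]
    have h2 : ((2 * (Finset.univ.filter
        (fun P : Fin d × Fin d => P.1 ≤ P.2)).card : ℕ) : ℝ)
        = ((d * d + d : ℕ) : ℝ) := by rw [h]
    push_cast at h2
    linarith
  -- rewrite the goal
  have hmain : ∑ l, ∑ m, (((hE l).sqrt * (hE m).sqrt).trace.re) ^ 2 = T :=
    Finset.sum_congr rfl fun l _ => Finset.sum_congr rfl fun m _ => by
      rw [htr2 l m, Complex.ofReal_re]
  have hmid : ∑ l, (((hE l).sqrt).trace.re) ^ 2 = (d : ℝ) := by
    rw [← hqd]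
    exact Finset.sum_congr rfl fun l _ => by rw [htr1 l, Complex.ofReal_re]
  rw [hmain, hmid]
  -- final arithmetic
  have hd2 : (2 : ℝ) ≤ (d : ℝ) := by exact_mod_cast hd
  have hdpos : (0 : ℝ) < (d : ℝ) := by linarith
  have hTpos : 0 ≤ T := by
    rw [hT]
    refine Finset.sum_nonneg fun l _ => Finset.sum_nonneg fun m _ => sq_nonneg _
  -- from hfinal and hcard : d^2 ≤ ((d*d+d)/2) * T
  have hkey : 2 * (d : ℝ) ^ 2 ≤ ((d : ℝ) * d + d) * T := by
    nlinarith [hfinal, hcard, hTpos]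
  rw [div_le_iff₀ (by linarith : (0 : ℝ) < (d : ℝ) + 1)]
  nlinarith [hkey, hdpos, hTpos]
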